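/- Fix a dimension n ≥ 1. For each set S ⊆ ℕ define the open set Y_S ⊆ (−1,1)ⁿ by Y_S := (−1,0)ⁿ ∪ ⋃_{m=1}^∞ ( (2^{−2m}, 2^{−2m+1}) \ ⋃_{s∈S} { 2^{−2s} + (k/(s+1))·2^{−2s} : k = 1, …, s } )ⁿ. Then whenever S, S' ⊆ ℕ and S ≠ S', there is no bijection f from Y_S onto Y_{S'} such that both f and f⁻¹ are uniformly continuous. -/

import Mathlib

/-- The open set `Y_S ⊆ (−1,1)ⁿ` of Proposition 3:
`Y_S = (−1,0)ⁿ ∪ ⋃_{m≥1} ((2^{−2m}, 2^{−2m+1}) \ ⋃_{s∈S} {2^{−2s} + (k/(s+1))·2^{−2s} : 1 ≤ k ≤ s})ⁿ`. -/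
noncomputable def YSet (n : ℕ) (S : Set ℕ) : Set (EuclideanSpace ℝ (Fin n)) :=
  {x | ∀ i, x i ∈ Set.Ioo (-1 : ℝ) 0} ∪
    ⋃ m ∈ Set.Ici (1 : ℕ), {x | ∀ i, x i ∈
      Set.Ioo ((2 : ℝ) ^ (-(2 * (m : ℤ)))) ((2 : ℝ) ^ (1 - 2 * (m : ℤ))) \
        ⋃ s ∈ S, (fun k : ℕ => (2 : ℝ) ^ (-(2 * (s : ℤ))) +
          ((k : ℝ) / ((s : ℝ) + 1)) * (2 : ℝ) ^ (-(2 * (s : ℤ)))) '' Set.Icc 1 s}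

noncomputable section Stmt7Aux
open Set Metric Classical

namespace Stmt7

variable {n : ℕ}

abbrev E (n : ℕ) := EuclideanSpace ℝ (Fin n)

def av (m : ℕ) : ℝ := (2:ℝ) ^ (-(2 * (m:ℤ)))
def hv (m : ℕ) : ℝ := av m / (m + 1)

lemma av_pos (m : ℕ) : 0 < av m := zpow_pos two_pos _
lemma hv_pos (m : ℕ) : 0 < hv m := div_pos (av_pos m) (by positivity)
lemma succ_mul_hv (m : ℕ) : ((m:ℝ)+1) * hv m = av m := by
  have : ((m:ℝ)+1) ≠ 0 := by positivity
  unfold hv; field_simp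
lemma two_av (m : ℕ) : (2:ℝ) ^ (1 - 2*(m:ℤ)) = 2 * av m := by
  have h1 : (1 - 2*(m:ℤ)) = 1 + (-(2*(m:ℤ))) := by ring
  rw [av, h1, zpow_add₀ (two_ne_zero), zpow_one]
lemma band_le {m m' : ℕ} (h : m < m') : 2 * av m' ≤ av m := by
  rw [← two_av]; unfold av
  apply zpow_le_zpow_right₀ one_le_two
  omega

def pbox (lo hi : Fin n → ℝ) : Set (E n) := {x | ∀ i, x i ∈ Ioo (lo i) (hi i)}

lemma isOpen_pbox (lo hi : Fin n → ℝ) : IsOpen (pbox lo hi) := by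
  have : pbox lo hi = ⋂ i, (EuclideanSpace.proj (𝕜 := ℝ) i) ⁻¹' (Ioo (lo i) (hi i)) := by
    ext x; simp [pbox]
  rw [this]
  exact isOpen_iInter_of_finite fun i =>
    (isOpen_Ioo).preimage (EuclideanSpace.proj i).continuous

lemma convex_pbox (lo hi : Fin n → ℝ) : Convex ℝ (pbox lo hi) := by
  intro x hx y hy a b ha hb hab i
  have := (convex_Ioo (lo i) (hi i)) (hx i) (hy i) ha hb hab
  simpa using this

lemma isPreconnected_pbox (lo hi : Fin n → ℝ) : IsPreconnected (pbox lo hi) :=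
  (convex_pbox lo hi).isPreconnected

lemma pbox_nonempty {lo hi : Fin n → ℝ} (h : ∀ i, lo i < hi i) : (pbox lo hi).Nonempty := by
  refine ⟨WithLp.toLp 2 (fun i => (lo i + hi i)/2 : Fin n → ℝ), fun i => ?_⟩
  constructor <;> [skip; skip] <;> · have := h i; simp only [PiLp.toLp_apply]; linarith

lemma av_antitone {m m' : ℕ} (h : m ≤ m') : av m' ≤ av m := by
  unfold av; apply zpow_le_zpow_right₀ one_le_two; omega

lemma coord_dist_le (x y : E n) (i : Fin n) : dist (x i) (y i) ≤ dist x y := by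
  rw [EuclideanSpace.dist_eq]
  have h1 : dist (x i) (y i) = Real.sqrt (dist (x i) (y i) ^ 2) :=
    (Real.sqrt_sq dist_nonneg).symm
  rw [h1]
  apply Real.sqrt_le_sqrt
  exact Finset.single_le_sum (f := fun j => dist (x j) (y j) ^ 2)
    (fun j _ => sq_nonneg _) (Finset.mem_univ i)

lemma dist_eq_single {x y : E n} (i : Fin n) (h : ∀ j, j ≠ i → x j = y j) :
    dist x y = dist (x i) (y i) := by
  rw [EuclideanSpace.dist_eq,
    Finset.sum_eq_single i (fun j _ hj => by rw [h j hj]; simp) (by simp)]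
  exact Real.sqrt_sq dist_nonneg

def cellB (m : ℕ) (g : Fin n → ℕ) : Set (E n) :=
  pbox (fun i => av m + g i * hv m) (fun i => av m + (g i + 1) * hv m)

def cubeB (m : ℕ) : Set (E n) := pbox (fun _ => av m) (fun _ => 2 * av m)

def negB : Set (E n) := pbox (fun _ => (-1:ℝ)) (fun _ => 0)

abbrev Idx (n : ℕ) := Option (ℕ × (Fin n → ℕ))

open Classical in
def piece (T : Set ℕ) : Idx n → Set (E n)
  | none => negB
  | some (m, g) =>
    if 1 ≤ m then
      if m ∈ T then (if ∀ i, g i ≤ m then cellB m g else ∅)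
      else (if g = fun _ => 0 then cubeB m else ∅)
    else ∅

open Classical in
lemma piece_some (T : Set ℕ) (m : ℕ) (g : Fin n → ℕ) :
    piece T (some (m, g)) =
      if 1 ≤ m then
        if m ∈ T then (if ∀ i, g i ≤ m then cellB m g else ∅)
        else (if g = fun _ => 0 then cubeB m else ∅)
      else ∅ := rfl

lemma piece_none (T : Set ℕ) : piece (n := n) T none = negB := rfl

lemma cellB_nonempty (m : ℕ) (g : Fin n → ℕ) : (cellB m g).Nonempty :=
  pbox_nonempty fun i => by nlinarith [hv_pos m]

lemma isOpen_piece (T : Set ℕ) (lam : Idx n) : IsOpen (piece T lam) := by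
  rcases lam with _ | ⟨m, g⟩
  · exact isOpen_pbox _ _
  · rw [piece_some]; split_ifs <;> first | exact isOpen_pbox _ _ | exact isOpen_empty

lemma isPreconnected_piece (T : Set ℕ) (lam : Idx n) : IsPreconnected (piece T lam) := by
  rcases lam with _ | ⟨m, g⟩
  · exact isPreconnected_pbox _ _
  · rw [piece_some]; split_ifs <;>
      first | exact isPreconnected_pbox _ _ | exact isPreconnected_empty

lemma cellB_band {m : ℕ} {g : Fin n → ℕ} (hg : ∀ i, g i ≤ m) {x : E n}
    (hx : x ∈ cellB m g) (i : Fin n) : av m < x i ∧ x i < 2 * av m := by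
  obtain ⟨h1, h2⟩ := hx i
  dsimp only at h1 h2
  have hh := hv_pos m
  have hgi : (g i : ℝ) + 1 ≤ (m : ℝ) + 1 := by
    exact_mod_cast Nat.add_le_add_right (hg i) 1
  have h3 : ((g i : ℝ) + 1) * hv m ≤ ((m:ℝ) + 1) * hv m :=
    mul_le_mul_of_nonneg_right hgi hh.le
  have h4 := succ_mul_hv m
  have h5 : (0:ℝ) ≤ (g i : ℝ) * hv m :=
    mul_nonneg (Nat.cast_nonneg (g i)) hh.le
  exact ⟨by linarith, by linarith⟩

lemma mem_band {T : Set ℕ} {m : ℕ} {g : Fin n → ℕ} {x : E n}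
    (hx : x ∈ piece T (some (m, g))) (i : Fin n) :
    av m < x i ∧ x i < 2 * av m := by
  rw [piece_some] at hx
  split_ifs at hx with h1 h2 h3 h4
  · exact cellB_band h3 hx i
  · exact absurd hx (Set.notMem_empty x)
  · exact hx i
  · exact absurd hx (Set.notMem_empty x)
  · exact absurd hx (Set.notMem_empty x)

lemma piece_valid {T : Set ℕ} {m : ℕ} {g : Fin n → ℕ}
    (h : (piece (n := n) T (some (m, g))).Nonempty) :
    1 ≤ m ∧ (m ∈ T → ∀ i, g i ≤ m) ∧ (m ∉ T → g = fun _ => 0) := by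
  rw [piece_some] at h
  split_ifs at h with h1 h2 h3 h4 <;>
    first
      | exact ⟨h1, fun _ => h3, fun hm => absurd h2 (fun h => hm h)⟩
      | exact ⟨h1, fun hm => absurd hm h2, fun _ => h4⟩
      | simp at h

lemma cell_interval_disj {m : ℕ} {k k' : ℕ} (h : k < k') {t : ℝ}
    (h1 : t < av m + (k + 1) * hv m) (h2 : av m + k' * hv m < t) : False := by
  have hh := hv_pos m
  have : ((k:ℝ) + 1) ≤ (k' : ℝ) := by exact_mod_cast h
  nlinarith

lemma piece_disjoint (hn : 0 < n) (T : Set ℕ) {lam mu : Idx n} (h : lam ≠ mu) :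
    Disjoint (piece T lam) (piece T mu) := by
  set i0 : Fin n := ⟨0, hn⟩
  rw [Set.disjoint_left]
  intro x hx hx'
  rcases lam with _ | ⟨m, g⟩ <;> rcases mu with _ | ⟨m', g'⟩
  · exact h rfl
  · have h1 := (hx i0).2
    have h2 := (mem_band hx' i0).1
    have := av_pos m'; dsimp [negB, pbox] at h1; linarith
  · have h1 := (hx' i0).2
    have h2 := (mem_band hx i0).1
    have := av_pos m; dsimp [negB, pbox] at h1; linarith
  · rcases Nat.lt_trichotomy m m' with hmm | hmm | hmm
    · have h1 := (mem_band hx i0).1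
      have h2 := (mem_band hx' i0).2
      have := band_le hmm; linarith
    · subst hmm
      have hne : g ≠ g' := fun hg => h (by rw [hg])
      have hv1 := piece_valid ⟨x, hx⟩
      have hv2 := piece_valid ⟨x, hx'⟩
      by_cases hmT : m ∈ T
      · obtain ⟨i, hi⟩ := Function.ne_iff.1 hne
        have hc1 : x ∈ cellB m g := by
          rw [piece_some, if_pos hv1.1, if_pos hmT, if_pos (hv1.2.1 hmT)] at hx
          exact hx
        have hc2 : x ∈ cellB m g' := by
          rw [piece_some, if_pos hv1.1, if_pos hmT, if_pos (hv2.2.1 hmT)] at hx'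
          exact hx'
        rcases Nat.lt_or_ge (g i) (g' i) with hgg | hgg
        · exact cell_interval_disj hgg (hc1 i).2 (hc2 i).1
        · have hgg' : g' i < g i := by omega
          exact cell_interval_disj hgg' (hc2 i).2 (hc1 i).1
      · exact h (by rw [hv1.2.2 hmT, hv2.2.2 hmT])
    · have h1 := (mem_band hx' i0).1
      have h2 := (mem_band hx i0).2
      have := band_le hmm; linarith

def rem (s : ℕ) : Set ℝ :=
  (fun k : ℕ => (2 : ℝ) ^ (-(2 * (s : ℤ))) +
    ((k : ℝ) / ((s : ℝ) + 1)) * (2 : ℝ) ^ (-(2 * (s : ℤ)))) '' Set.Icc 1 s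

lemma mem_rem_iff {s : ℕ} {t : ℝ} :
    t ∈ rem s ↔ ∃ k : ℕ, 1 ≤ k ∧ k ≤ s ∧ t = av s + k * hv s := by
  constructor
  · rintro ⟨k, ⟨hk1, hk2⟩, rfl⟩
    refine ⟨k, hk1, hk2, ?_⟩
    simp only [hv, av]; ring
  · rintro ⟨k, hk1, hk2, rfl⟩
    refine ⟨k, ⟨hk1, hk2⟩, ?_⟩
    simp only [hv, av]; ring

lemma rem_subset {s : ℕ} {t : ℝ} (ht : t ∈ rem s) : av s < t ∧ t < 2 * av s := by
  obtain ⟨k, hk1, hk2, rfl⟩ := mem_rem_iff.1 ht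
  have hh := hv_pos s
  have h4 := succ_mul_hv s
  have hk1' : (1:ℝ) ≤ (k:ℝ) := by exact_mod_cast hk1
  have hk2' : (k:ℝ) ≤ (s:ℝ) := by exact_mod_cast hk2
  constructor
  · nlinarith
  · nlinarith

lemma mem_YSet_iff {T : Set ℕ} {x : E n} :
    x ∈ YSet n T ↔ (∀ i, x i ∈ Ioo (-1:ℝ) 0) ∨
      ∃ m, 1 ≤ m ∧ ∀ i, x i ∈ Ioo (av m) (2 * av m) ∧ ∀ s ∈ T, x i ∉ rem s := by
  unfold YSet
  constructor
  · rintro (h | h)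
    · exact Or.inl h
    · simp only [Set.mem_iUnion, Set.mem_Ici] at h
      obtain ⟨m, hm, hx⟩ := h
      refine Or.inr ⟨m, hm, fun i => ?_⟩
      obtain ⟨h1, h2⟩ := hx i
      rw [two_av] at h1
      refine ⟨h1, fun s hs hr => h2 ?_⟩
      simp only [Set.mem_iUnion]
      exact ⟨s, hs, hr⟩
  · rintro (h | h)
    · exact Or.inl h
    · obtain ⟨m, hm, hx⟩ := h
      right
      simp only [Set.mem_iUnion, Set.mem_Ici]
      refine ⟨m, hm, fun i => ?_⟩
      obtain ⟨h1, h2⟩ := hx i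
      rw [Set.mem_diff]
      refine ⟨by rw [two_av]; exact h1, fun hr => ?_⟩
      simp only [Set.mem_iUnion] at hr
      obtain ⟨s, hs, hr⟩ := hr
      exact h2 s hs hr

lemma oneD {m : ℕ} {t : ℝ} (h1 : t ∈ Ioo (av m) (2 * av m)) (h2 : t ∉ rem m) :
    ∃ k ≤ m, t ∈ Ioo (av m + k * hv m) (av m + (k + 1) * hv m) := by
  have hh := hv_pos m
  have h4 := succ_mul_hv m
  obtain ⟨hl, hr⟩ := h1
  set q : ℝ := (t - av m) / hv m with hq
  have hq0 : 0 < q := div_pos (by linarith) hh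
  have hqm : q < (m:ℝ) + 1 := by
    rw [div_lt_iff₀ hh]
    nlinarith
  set k : ℕ := ⌊q⌋₊ with hk
  have hkm : k ≤ m := by
    have : k < m + 1 := by
      rw [hk, Nat.floor_lt hq0.le]
      push_cast
      exact hqm
    omega
  have hkq : (k:ℝ) ≤ q := Nat.floor_le hq0.le
  have hqk : q < (k:ℝ) + 1 := Nat.lt_floor_add_one q
  have hub : t < av m + ((k:ℝ) + 1) * hv m := by
    rw [div_lt_iff₀ hh] at hqk
    · linarith [hqk]
  have hlb : av m + (k:ℝ) * hv m < t := by
    rcases lt_or_eq_of_le hkq with h | h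
    · rw [lt_div_iff₀ hh] at h
      linarith
    · exfalso
      have ht : t = av m + (k:ℝ) * hv m := by
        rw [hq, eq_div_iff hh.ne'] at h
        linarith
      have hk1 : 1 ≤ k := by
        rcases Nat.eq_zero_or_pos k with h0 | h0
        · exfalso; rw [h0] at ht; norm_num at ht; linarith
        · exact h0
      exact h2 (mem_rem_iff.2 ⟨k, hk1, hkm, ht⟩)
  exact ⟨k, hkm, hlb, hub⟩

lemma cell_sub_clean {m : ℕ} {kk : ℕ} (hk : kk ≤ m) {t : ℝ}
    (ht : t ∈ Ioo (av m + kk * hv m) (av m + (kk + 1) * hv m)) :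
    t ∈ Ioo (av m) (2 * av m) ∧ ∀ s, t ∉ rem s := by
  have hh := hv_pos m
  have h4 := succ_mul_hv m
  obtain ⟨hl, hr⟩ := ht
  have hkk : (0:ℝ) ≤ (kk:ℝ) * hv m := mul_nonneg (Nat.cast_nonneg kk) hh.le
  have hkk1 : ((kk:ℝ) + 1) ≤ (m:ℝ) + 1 := by exact_mod_cast Nat.add_le_add_right hk 1
  have hband : t ∈ Ioo (av m) (2 * av m) := by
    constructor
    · linarith
    · have : ((kk:ℝ) + 1) * hv m ≤ ((m:ℝ) + 1) * hv m :=
        mul_le_mul_of_nonneg_right hkk1 hh.le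
      linarith
  refine ⟨hband, fun s hrem => ?_⟩
  have hband' := rem_subset hrem
  rcases Nat.lt_trichotomy s m with hsm | hsm | hsm
  · have := band_le hsm
    linarith [hband.2, hband'.1]
  · subst hsm
    obtain ⟨j, hj1, hj2, hj⟩ := mem_rem_iff.1 hrem
    have hlt1 : (kk:ℝ) * hv s < (j:ℝ) * hv s := by linarith [hj ▸ hl]
    have hlt2 : (j:ℝ) * hv s < ((kk:ℝ) + 1) * hv s := by linarith [hj ▸ hr]
    have hkj : (kk:ℝ) < (j:ℝ) := lt_of_mul_lt_mul_right hlt1 hh.le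
    have hjk : (j:ℝ) < (kk:ℝ) + 1 := lt_of_mul_lt_mul_right hlt2 hh.le
    have : kk < j := by exact_mod_cast hkj
    have : j < kk + 1 := by exact_mod_cast hjk
    omega
  · have := band_le hsm
    linarith [hband.1, hband'.2]

lemma piece_subset_Y (T : Set ℕ) (lam : Idx n) : piece T lam ⊆ YSet n T := by
  intro x hx
  rw [mem_YSet_iff]
  rcases lam with _ | ⟨m, g⟩
  · exact Or.inl hx
  · have hv1 := piece_valid ⟨x, hx⟩
    right
    refine ⟨m, hv1.1, fun i => ?_⟩
    by_cases hmT : m ∈ T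
    · have hc : x ∈ cellB m g := by
        rw [piece_some, if_pos hv1.1, if_pos hmT, if_pos (hv1.2.1 hmT)] at hx
        exact hx
      have := cell_sub_clean (hv1.2.1 hmT i) (hc i)
      exact ⟨this.1, fun s _ => this.2 s⟩
    · have hc : x ∈ cubeB m := by
        rw [piece_some, if_pos hv1.1, if_neg hmT, if_pos (hv1.2.2 hmT)] at hx
        exact hx
      refine ⟨hc i, fun s hs hrem => ?_⟩
      have hband' := rem_subset hrem
      obtain ⟨hb1, hb2⟩ := hc i
      dsimp only at hb1 hb2
      rcases Nat.lt_trichotomy s m with hsm | hsm | hsm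
      · have := band_le hsm; linarith
      · exact hmT (hsm ▸ hs)
      · have := band_le hsm; linarith

lemma Y_subset_iUnion (T : Set ℕ) : YSet n T ⊆ ⋃ lam : Idx n, piece T lam := by
  intro x hx
  rw [mem_YSet_iff] at hx
  rcases hx with h | ⟨m, hm, h⟩
  · exact Set.mem_iUnion.2 ⟨none, h⟩
  · by_cases hmT : m ∈ T
    · have hch : ∀ i, ∃ k ≤ m,
          x i ∈ Ioo (av m + k * hv m) (av m + (k + 1) * hv m) := fun i =>
        oneD (h i).1 ((h i).2 m hmT)
      choose gk hgk1 hgk2 using hch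
      refine Set.mem_iUnion.2 ⟨some (m, gk), ?_⟩
      rw [piece_some, if_pos hm, if_pos hmT, if_pos hgk1]
      exact fun i => by
        have := hgk2 i
        push_cast at this ⊢
        exact this
    · refine Set.mem_iUnion.2 ⟨some (m, fun _ => 0), ?_⟩
      rw [piece_some, if_pos hm, if_neg hmT, if_pos rfl]
      exact fun i => (h i).1

lemma idx_eq_of_inter (hn : 0 < n) (T : Set ℕ) {lam mu : Idx n}
    (h : (piece T lam ∩ piece T mu).Nonempty) : lam = mu := by
  by_contra hne
  obtain ⟨x, hx, hx'⟩ := h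
  exact Set.disjoint_left.1 (piece_disjoint hn T hne) hx hx'

lemma sep (hn : 0 < n) (T : Set ℕ) {lam mu : Idx n} (hne : lam ≠ mu)
    (hcl : ∀ ε > (0:ℝ), ∃ x ∈ piece T lam, ∃ y ∈ piece T mu, dist x y < ε) :
    ∃ m gN gN', m ∈ T ∧ lam = some (m, gN) ∧ mu = some (m, gN') := by
  set i0 : Fin n := ⟨0, hn⟩
  obtain ⟨x1, hx1, y1, hy1, _⟩ := hcl 1 one_pos
  rcases lam with _ | ⟨m, g⟩ <;> rcases mu with _ | ⟨m', g'⟩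
  · exact absurd rfl hne
  · exfalso
    obtain ⟨x, hx, y, hy, hd⟩ := hcl (av m') (av_pos m')
    have h1 := (hx i0).2
    dsimp only at h1
    have h2 := (mem_band hy i0).1
    have h0 := av_pos m'
    have h3 := coord_dist_le x y i0
    rw [Real.dist_eq] at h3
    have : av m' < |x i0 - y i0| := by
      rw [abs_sub_comm, abs_of_pos (by linarith)]
      linarith
    linarith
  · exfalso
    obtain ⟨x, hx, y, hy, hd⟩ := hcl (av m) (av_pos m)
    have h1 := (hy i0).2
    dsimp only at h1
    have h2 := (mem_band hx i0).1
    have h0 := av_pos m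
    have h3 := coord_dist_le x y i0
    rw [Real.dist_eq] at h3
    have : av m < |x i0 - y i0| := by
      rw [abs_of_pos (by linarith)]
      linarith
    linarith
  · rcases Nat.lt_trichotomy m m' with hmm | hmm | hmm
    · exfalso
      obtain ⟨x, hx, y, hy, hd⟩ := hcl (av m / 2) (by have := av_pos m; linarith)
      have h1 := (mem_band hx i0).1
      have h2 := (mem_band hy i0).2
      have h5 : 2 * av m' ≤ 2 * av (m+1) := by
        have := av_antitone (Nat.succ_le_of_lt hmm)
        linarith
      have h6 : 2 * av (m+1) = av m / 2 := by
        have e1 : av (m+1) = av m * (2:ℝ)^(-2:ℤ) := by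
          unfold av
          rw [← zpow_add₀ (two_ne_zero (α := ℝ))]
          congr 1
          push_cast
          ring
        have e2 : ((2:ℝ))^(-2:ℤ) = 1/4 := by norm_num
        rw [e1, e2]; ring
      have h3 := coord_dist_le x y i0
      rw [Real.dist_eq] at h3
      have h0 := av_pos m
      have : av m / 2 < |x i0 - y i0| := by
        rw [abs_of_pos (by linarith)]
        linarith
      linarith
    · subst hmm
      by_cases hmT : m ∈ T
      · exact ⟨m, g, g', hmT, rfl, rfl⟩
      · exfalso
        have hv1 := piece_valid ⟨x1, hx1⟩
        have hv2 := piece_valid ⟨y1, hy1⟩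
        exact hne (by rw [hv1.2.2 hmT, hv2.2.2 hmT])
    · exfalso
      obtain ⟨x, hx, y, hy, hd⟩ := hcl (av m' / 2) (by have := av_pos m'; linarith)
      have h1 := (mem_band hy i0).1
      have h2 := (mem_band hx i0).2
      have h5 : 2 * av m ≤ 2 * av (m'+1) := by
        have := av_antitone (Nat.succ_le_of_lt hmm)
        linarith
      have h6 : 2 * av (m'+1) = av m' / 2 := by
        have e1 : av (m'+1) = av m' * (2:ℝ)^(-2:ℤ) := by
          unfold av
          rw [← zpow_add₀ (two_ne_zero (α := ℝ))]
          congr 1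
          push_cast
          ring
        have e2 : ((2:ℝ))^(-2:ℤ) = 1/4 := by norm_num
        rw [e1, e2]; ring
      have h3 := coord_dist_le x y i0
      rw [Real.dist_eq] at h3
      have h0 := av_pos m'
      have : av m' / 2 < |x i0 - y i0| := by
        rw [abs_sub_comm, abs_of_pos (by linarith)]
        linarith
      linarith

lemma cell_dist_zero {m : ℕ} (g : Fin n → ℕ) (i0 : Fin n) {ε : ℝ} (hε : 0 < ε) :
    ∃ x ∈ cellB (n := n) m g,
      ∃ y ∈ cellB m (Function.update g i0 (g i0 + 1)), dist x y < ε := by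
  have hh := hv_pos m
  set δ : ℝ := min (hv m / 2) (ε / 3) with hδ
  have hδ0 : 0 < δ := lt_min (by linarith) (by linarith)
  have hδh : δ < hv m := lt_of_le_of_lt (min_le_left _ _) (by linarith)
  have hδε : δ ≤ ε / 3 := min_le_right _ _
  set x : E n := WithLp.toLp 2 (fun i => if i = i0 then av m + ((g i0 : ℝ) + 1) * hv m - δ
    else av m + (g i : ℝ) * hv m + hv m / 2 : Fin n → ℝ) with hxd
  set y : E n := WithLp.toLp 2 (fun i => if i = i0 then av m + ((g i0 : ℝ) + 1) * hv m + δ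
    else av m + (g i : ℝ) * hv m + hv m / 2 : Fin n → ℝ) with hyd
  have hxy : ∀ j, j ≠ i0 → x j = y j := by
    intro j hj
    show (if j = i0 then _ else _) = (if j = i0 then _ else _)
    rw [if_neg hj, if_neg hj]
  refine ⟨x, ?_, y, ?_, ?_⟩
  · intro i
    by_cases hi : i = i0
    · rw [hi]
      constructor
      · show av m + (g i0 : ℝ) * hv m < (if i0 = i0 then _ else _)
        rw [if_pos rfl]
        linarith
      · show (if i0 = i0 then _ else _) < av m + ((g i0 : ℝ) + 1) * hv m
        rw [if_pos rfl]
        linarith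
    · constructor
      · show av m + (g i : ℝ) * hv m < (if i = i0 then _ else _)
        rw [if_neg hi]
        linarith
      · show (if i = i0 then _ else _) < av m + ((g i : ℝ) + 1) * hv m
        rw [if_neg hi]
        linarith
  · intro i
    by_cases hi : i = i0
    · rw [hi]
      have hup : ((Function.update g i0 (g i0 + 1) i0 : ℕ) : ℝ) = (g i0 : ℝ) + 1 := by
        rw [Function.update_self]
        push_cast
        ring
      constructor
      · show av m + ((Function.update g i0 (g i0 + 1) i0 : ℕ) : ℝ) * hv m
          < (if i0 = i0 then _ else _)
        rw [if_pos rfl, hup]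
        linarith
      · show (if i0 = i0 then _ else _) <
          av m + (((Function.update g i0 (g i0 + 1) i0 : ℕ) : ℝ) + 1) * hv m
        rw [if_pos rfl, hup]
        linarith
    · have hup : (Function.update g i0 (g i0 + 1) i : ℕ) = g i := by
        rw [Function.update_of_ne hi]
      constructor
      · show av m + (Function.update g i0 (g i0 + 1) i : ℝ) * hv m < (if i = i0 then _ else _)
        rw [if_neg hi, hup]
        linarith
      · show (if i = i0 then _ else _) <
          av m + ((Function.update g i0 (g i0 + 1) i : ℝ) + 1) * hv m
        rw [if_neg hi, hup]
        linarith
  · rw [dist_eq_single i0 hxy]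
    have hx0 : x i0 = av m + ((g i0 : ℝ) + 1) * hv m - δ := by
      show (if i0 = i0 then _ else _) = _
      rw [if_pos rfl]
    have hy0 : y i0 = av m + ((g i0 : ℝ) + 1) * hv m + δ := by
      show (if i0 = i0 then _ else _) = _
      rw [if_pos rfl]
    rw [hx0, hy0, Real.dist_eq]
    rw [show av m + ((g i0 : ℝ) + 1) * hv m - δ - (av m + ((g i0 : ℝ) + 1) * hv m + δ)
        = -(2*δ) by ring, abs_neg, abs_of_pos (by linarith)]
    linarith

open Classical in
def extMap (T T' : Set ℕ) (f : ↥(YSet n T) → ↥(YSet n T')) : E n → E n :=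
  fun x => if h : x ∈ YSet n T then (f ⟨x, h⟩ : E n) else x

lemma extMap_eq {T T' : Set ℕ} (f : ↥(YSet n T) → ↥(YSet n T')) {x : E n}
    (hx : x ∈ YSet n T) : extMap T T' f x = (f ⟨x, hx⟩ : E n) := dif_pos hx

lemma extMap_mem {T T' : Set ℕ} (f : ↥(YSet n T) → ↥(YSet n T')) {x : E n}
    (hx : x ∈ YSet n T) : extMap T T' f x ∈ YSet n T' := by
  rw [extMap_eq f hx]; exact (f ⟨x, hx⟩).2

lemma extMap_continuousOn {T T' : Set ℕ} (f : ↥(YSet n T) → ↥(YSet n T'))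
    (hf : Continuous f) : ContinuousOn (extMap T T' f) (YSet n T) := by
  rw [continuousOn_iff_continuous_restrict]
  have : (YSet n T).domRestrict (extMap T T' f) = fun x => (f x : E n) := by
    funext x
    simp only [Set.domRestrict_apply]
    rw [extMap_eq f x.2]
  rw [this]
  exact continuous_subtype_val.comp hf

lemma exists_piece_superset (hn : 0 < n) (T : Set ℕ) {C : Set (E n)}
    (hC : IsPreconnected C) (hCY : C ⊆ YSet n T) {c : E n} (hc : c ∈ C) :
    ∃ lam, c ∈ piece T lam ∧ C ⊆ piece T lam := by
  obtain ⟨lam, hlam⟩ := Set.mem_iUnion.1 (Y_subset_iUnion T (hCY hc))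
  refine ⟨lam, hlam, ?_⟩
  have hv : IsOpen (⋃ mu : {mu : Idx n // mu ≠ lam}, piece T mu.1) :=
    isOpen_iUnion fun mu => isOpen_piece T mu.1
  have hdisj : Disjoint (piece T lam) (⋃ mu : {mu : Idx n // mu ≠ lam}, piece T mu.1) := by
    rw [Set.disjoint_iUnion_right]
    exact fun mu => (piece_disjoint hn T (Ne.symm mu.2))
  have hsub : C ⊆ piece T lam ∪ ⋃ mu : {mu : Idx n // mu ≠ lam}, piece T mu.1 := by
    intro z hz
    obtain ⟨kap, hkap⟩ := Set.mem_iUnion.1 (Y_subset_iUnion T (hCY hz))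
    by_cases hk : kap = lam
    · exact Or.inl (hk ▸ hkap)
    · exact Or.inr (Set.mem_iUnion.2 ⟨⟨kap, hk⟩, hkap⟩)
  exact hC.subset_left_of_subset_union (isOpen_piece T lam) hv hdisj hsub ⟨c, hc, hlam⟩

def blkOf : Idx n → ℕ
  | none => 0
  | some (m, _) => m

lemma oneSided (hn : 0 < n) {S S' : Set ℕ} (hS : 0 ∉ S) (hS' : 0 ∉ S')
    (f : ↥(YSet n S) ≃ ↥(YSet n S')) (hf : UniformContinuous ⇑f)
    (hf' : UniformContinuous ⇑f.symm) {s : ℕ} (hs : s ∈ S) :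
    ∃ m ∈ S', ∃ Γ : (Fin n → Fin (s+1)) → (Fin n → Fin (m+1)), Function.Injective Γ ∧
      ∀ (g : Fin n → Fin (s+1)) (x : E n) (hx : x ∈ YSet n S),
        x ∈ cellB s (fun i => (g i : ℕ)) →
          (f ⟨x, hx⟩ : E n) ∈ cellB m (fun i => (Γ g i : ℕ)) := by
  have hs1 : 1 ≤ s := Nat.one_le_iff_ne_zero.2 fun h => hS (h ▸ hs)
  set F := extMap S S' ⇑f with hF
  set G := extMap S' S ⇑f.symm with hG
  have hcellpiece : ∀ g : Fin n → Fin (s+1),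
      piece S (some (s, fun i => (g i : ℕ))) = cellB s (fun i => (g i : ℕ)) := by
    intro g
    rw [piece_some, if_pos hs1, if_pos hs, if_pos (fun i => Nat.lt_succ_iff.1 (g i).2)]
  have hcellY : ∀ g : Fin n → Fin (s+1),
      cellB (n := n) s (fun i => (g i : ℕ)) ⊆ YSet n S := fun g =>
    (hcellpiece g) ▸ piece_subset_Y S _
  have hcnon : ∀ g : Fin n → Fin (s+1),
      (cellB (n := n) s (fun i => (g i : ℕ))).Nonempty := fun g => cellB_nonempty s _
  choose cp hcp using hcnon
  have himg : ∀ g : Fin n → Fin (s+1), ∃ lam,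
      F (cp g) ∈ piece S' lam ∧ F '' (cellB s (fun i => (g i : ℕ))) ⊆ piece S' lam := by
    intro g
    apply exists_piece_superset hn S'
    · exact (isPreconnected_pbox _ _).image F
        ((extMap_continuousOn ⇑f hf.continuous).mono (hcellY g))
    · rintro - ⟨z, hz, rfl⟩
      exact extMap_mem ⇑f (hcellY g hz)
    · exact Set.mem_image_of_mem F (hcp g)
  choose lam hlam1 hlam2 using himg
  have hGF : ∀ x (hx : x ∈ YSet n S), G (F x) = x := by
    intro x hx
    rw [hF, hG, extMap_eq ⇑f hx, extMap_eq ⇑f.symm (f ⟨x, hx⟩).2]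
    have h2 : (⟨((f ⟨x, hx⟩ : ↥(YSet n S')) : E n), (f ⟨x, hx⟩).2⟩ : ↥(YSet n S'))
        = f ⟨x, hx⟩ := rfl
    rw [h2, Equiv.symm_apply_apply]
  -- injectivity of lam
  have hlaminj : Function.Injective lam := by
    intro g1 g2 h12
    obtain ⟨kap, hkap1, hkap2⟩ := exists_piece_superset hn S
      (hC := (isPreconnected_piece S' (lam g1)).image G
        ((extMap_continuousOn ⇑f.symm hf'.continuous).mono (piece_subset_Y S' _)))
      (hCY := by
        rintro - ⟨z, hz, rfl⟩
        exact extMap_mem ⇑f.symm (piece_subset_Y S' _ hz))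
      (hc := Set.mem_image_of_mem G (hlam1 g1))
    have hsub : ∀ g : Fin n → Fin (s+1), lam g = lam g1 →
        cellB s (fun i => (g i : ℕ)) ⊆ piece S kap := by
      intro g hg z hz
      have h1 : F z ∈ piece S' (lam g1) := hg ▸ hlam2 g ⟨z, hz, rfl⟩
      have h2 : G (F z) ∈ G '' piece S' (lam g1) := Set.mem_image_of_mem G h1
      rw [hGF z (hcellY g hz)] at h2
      exact hkap2 h2
    have e1 : some (s, fun i => ((g1 i : ℕ))) = kap := by
      apply idx_eq_of_inter hn S
      exact ⟨cp g1, (hcellpiece g1).symm ▸ hcp g1, hsub g1 rfl (hcp g1)⟩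
    have e2 : some (s, fun i => ((g2 i : ℕ))) = kap := by
      apply idx_eq_of_inter hn S
      exact ⟨cp g2, (hcellpiece g2).symm ▸ hcp g2, hsub g2 h12.symm (hcp g2)⟩
    have e3 : (fun i => ((g1 i : ℕ))) = (fun i => ((g2 i : ℕ))) := by
      have := e1.trans e2.symm
      simpa using this
    funext i
    exact Fin.ext (congrFun e3 i)
  -- step lemma
  have hstep : ∀ (g1 g2 : Fin n → Fin (s+1)) (i0 : Fin n),
      ((fun i => (g2 i : ℕ)) =
        Function.update (fun i => (g1 i : ℕ)) i0 ((g1 i0 : ℕ) + 1)) →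
      ∃ m γ1 γ2, m ∈ S' ∧ lam g1 = some (m, γ1) ∧ lam g2 = some (m, γ2) := by
    intro g1 g2 i0 hup
    have hne : g1 ≠ g2 := by
      intro h
      subst h
      have := congrFun hup i0
      simp [Function.update] at this
    have hcl : ∀ ε > (0:ℝ), ∃ x ∈ piece S' (lam g1), ∃ y ∈ piece S' (lam g2),
        dist x y < ε := by
      intro ε hε
      obtain ⟨δ, hδ0, hδ⟩ := Metric.uniformContinuous_iff.1 hf ε hε
      obtain ⟨x, hx, y, hy, hxy⟩ := cell_dist_zero (m := s) (fun i => (g1 i : ℕ)) i0 hδ0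
      rw [← hup] at hy
      have hxY := hcellY g1 hx
      have hyY := hcellY g2 hy
      refine ⟨F x, hlam2 g1 ⟨x, hx, rfl⟩, F y, hlam2 g2 ⟨y, hy, rfl⟩, ?_⟩
      rw [hF, extMap_eq ⇑f hxY, extMap_eq ⇑f hyY]
      have hd : dist (⟨x, hxY⟩ : ↥(YSet n S)) (⟨y, hyY⟩ : ↥(YSet n S)) < δ := by
        rw [Subtype.dist_eq]; exact hxy
      have := hδ hd
      rw [Subtype.dist_eq] at this
      exact this
    exact sep hn S' (fun h => hne (hlaminj h)) hcl
  set i0 : Fin n := ⟨0, hn⟩ with hi0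
  -- every g has the "some" form with block in S'
  have hform : ∀ g : Fin n → Fin (s+1),
      ∃ γ, lam g = some (blkOf (lam g), γ) ∧ blkOf (lam g) ∈ S' := by
    intro g
    by_cases h : (g i0 : ℕ) < s
    · set g2 : Fin n → Fin (s+1) := fun i => if i = i0 then ⟨(g i0 : ℕ) + 1, by omega⟩
        else g i with hg2
      have hup : (fun i => (g2 i : ℕ)) =
          Function.update (fun i => (g i : ℕ)) i0 ((g i0 : ℕ) + 1) := by
        funext i
        by_cases hi : i = i0
        · subst hi; simp [hg2, Function.update]
        · simp [hg2, Function.update, hi]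
      obtain ⟨m, γ1, γ2, hm, h1, _⟩ := hstep g g2 i0 hup
      exact ⟨γ1, by rw [h1]; rfl, by rw [h1]; exact hm⟩
    · have h' : 1 ≤ (g i0 : ℕ) := by
        have := (g i0).2
        omega
      set g1 : Fin n → Fin (s+1) := fun i => if i = i0 then ⟨(g i0 : ℕ) - 1, by omega⟩
        else g i with hg1
      have hup : (fun i => (g i : ℕ)) =
          Function.update (fun i => (g1 i : ℕ)) i0 ((g1 i0 : ℕ) + 1) := by
        funext i
        by_cases hi : i = i0
        · subst hi; simp [hg1, Function.update]; omega
        · simp [hg1, Function.update, hi]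
      obtain ⟨m, γ1, γ2, hm, _, h2⟩ := hstep g1 g i0 hup
      exact ⟨γ2, by rw [h2]; rfl, by rw [h2]; exact hm⟩
  -- block is constant
  set g0 : Fin n → Fin (s+1) := fun _ => ⟨0, by omega⟩ with hg0
  have hBL : ∀ g : Fin n → Fin (s+1), blkOf (lam g) = blkOf (lam g0) := by
    have hind : ∀ k (g : Fin n → Fin (s+1)), (∑ i, (g i : ℕ)) ≤ k →
        blkOf (lam g) = blkOf (lam g0) := by
      intro k
      induction k with
      | zero =>
        intro g hg
        have : g = g0 := by
          funext i
          apply Fin.ext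
          have : (g i : ℕ) = 0 := by
            have := Finset.sum_eq_zero_iff.1 (Nat.le_zero.1 hg) i (Finset.mem_univ i)
            exact this
          simp [hg0, this]
        rw [this]
      | succ k ih =>
        intro g hg
        by_cases hzero : ∀ i, (g i : ℕ) = 0
        · have : g = g0 := funext fun i => Fin.ext (by simp [hg0, hzero i])
          rw [this]
        · push_neg at hzero
          obtain ⟨j0, hj0⟩ := hzero
          have hj0' : 1 ≤ (g j0 : ℕ) := Nat.one_le_iff_ne_zero.2 hj0
          set g1 : Fin n → Fin (s+1) := fun i => if i = j0 then ⟨(g j0 : ℕ) - 1, by omega⟩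
            else g i with hg1
          have hup : (fun i => (g i : ℕ)) =
              Function.update (fun i => (g1 i : ℕ)) j0 ((g1 j0 : ℕ) + 1) := by
            funext i
            by_cases hi : i = j0
            · subst hi; simp [hg1, Function.update]; omega
            · simp [hg1, Function.update, hi]
          obtain ⟨m, γ1, γ2, hm, h1, h2⟩ := hstep g1 g j0 hup
          have heq : blkOf (lam g1) = blkOf (lam g) := by rw [h1, h2]; rfl
          have hsum : (∑ i, (g1 i : ℕ)) + 1 = ∑ i, (g i : ℕ) := by
            have e1 := Finset.sum_erase_add Finset.univ
              (fun i => (g1 i : ℕ)) (Finset.mem_univ j0)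
            have e2 := Finset.sum_erase_add Finset.univ
              (fun i => (g i : ℕ)) (Finset.mem_univ j0)
            have e3 : ∑ i ∈ Finset.univ.erase j0, (g1 i : ℕ)
                = ∑ i ∈ Finset.univ.erase j0, (g i : ℕ) := by
              apply Finset.sum_congr rfl
              intro i hi
              simp [hg1, (Finset.mem_erase.1 hi).1]
            have e4 : (g1 j0 : ℕ) = (g j0 : ℕ) - 1 := by simp [hg1]
            omega
          rw [← heq]
          exact ih g1 (by omega)
    exact fun g => hind (∑ i, (g i : ℕ)) g le_rfl
  set m := blkOf (lam g0) with hmdef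
  have hmS' : m ∈ S' := by
    obtain ⟨γ, h1, h2⟩ := hform g0
    exact h2
  have hm1 : 1 ≤ m := Nat.one_le_iff_ne_zero.2 fun h => hS' (h ▸ hmS')
  have hγ : ∀ g : Fin n → Fin (s+1), ∃ γ : Fin n → ℕ,
      lam g = some (m, γ) ∧ ∀ i, γ i ≤ m := by
    intro g
    obtain ⟨γ, h1, h2⟩ := hform g
    rw [hBL g] at h1
    refine ⟨γ, h1, ?_⟩
    have hne : (piece (n := n) S' (some (m, γ))).Nonempty := ⟨F (cp g), h1 ▸ hlam1 g⟩
    exact (piece_valid hne).2.1 hmS'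
  choose γN hγN1 hγN2 using hγ
  refine ⟨m, hmS', fun g => fun i => ⟨γN g i, Nat.lt_succ_of_le (hγN2 g i)⟩, ?_, ?_⟩
  · intro g1 g2 h12
    apply hlaminj
    rw [hγN1 g1, hγN1 g2]
    have : γN g1 = γN g2 := by
      funext i
      have := congrFun h12 i
      exact congrArg Fin.val this
    rw [this]
  · intro g x hx hcell
    have h1 : F x ∈ piece S' (lam g) := hlam2 g ⟨x, hcell, rfl⟩
    rw [hγN1 g, piece_some, if_pos hm1, if_pos hmS', if_pos (hγN2 g)] at h1
    rw [hF, extMap_eq ⇑f hx] at h1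
    exact h1

lemma subset_of_equiv (hn : 0 < n) {S S' : Set ℕ} (hS : 0 ∉ S) (hS' : 0 ∉ S')
    (f : ↥(YSet n S) ≃ ↥(YSet n S')) (hf : UniformContinuous ⇑f)
    (hf' : UniformContinuous ⇑f.symm) : S ⊆ S' := by
  intro s hs
  have hs1 : 1 ≤ s := Nat.one_le_iff_ne_zero.2 fun h => hS (h ▸ hs)
  obtain ⟨m, hm, Γ, hΓi, hΓmap⟩ := oneSided hn hS hS' f hf hf' hs
  obtain ⟨t, ht, Γ', hΓ'i, hΓ'map⟩ := oneSided hn hS' hS f.symm hf'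
    (by simpa using hf) hm
  set g0 : Fin n → Fin (s+1) := fun _ => ⟨0, by omega⟩ with hg0
  obtain ⟨x0, hx0⟩ := cellB_nonempty (n := n) s (fun i => (g0 i : ℕ))
  have hx0Y : x0 ∈ YSet n S := by
    have hp : piece S (some (s, fun i => (g0 i : ℕ))) = cellB s (fun i => (g0 i : ℕ)) := by
      rw [piece_some, if_pos hs1, if_pos hs, if_pos (fun i => Nat.lt_succ_iff.1 (g0 i).2)]
    exact piece_subset_Y S _ (hp.symm ▸ hx0)
  have hy0 : (f ⟨x0, hx0Y⟩ : E n) ∈ cellB m (fun i => (Γ g0 i : ℕ)) :=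
    hΓmap g0 x0 hx0Y hx0
  have hy0Y : ((f ⟨x0, hx0Y⟩ : ↥(YSet n S')) : E n) ∈ YSet n S' := (f ⟨x0, hx0Y⟩).2
  have hx1 : (f.symm ⟨((f ⟨x0, hx0Y⟩ : ↥(YSet n S')) : E n), hy0Y⟩ : E n)
      ∈ cellB t (fun i => (Γ' (Γ g0) i : ℕ)) :=
    hΓ'map (Γ g0) _ hy0Y hy0
  have hxx : (⟨((f ⟨x0, hx0Y⟩ : ↥(YSet n S')) : E n), hy0Y⟩ : ↥(YSet n S'))
      = f ⟨x0, hx0Y⟩ := rfl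
  rw [hxx, Equiv.symm_apply_apply] at hx1
  have hts : t = s := by
    by_contra hts
    set i0 : Fin n := ⟨0, hn⟩
    have hb1 := cellB_band (g := fun i => ((g0 i : ℕ)))
      (fun i => Nat.lt_succ_iff.1 (g0 i).2) hx0 i0
    have hb2 := cellB_band (g := fun i => ((Γ' (Γ g0) i : ℕ)))
      (fun i => Nat.lt_succ_iff.1 (Γ' (Γ g0) i).2) hx1 i0
    rcases Nat.lt_trichotomy s t with h | h | h
    · have := band_le h
      linarith [hb1.1, hb2.2]
    · exact hts h.symm
    · have := band_le h
      linarith [hb2.1, hb1.2]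
  have c1 : (s+1)^n ≤ (m+1)^n := by
    have := Fintype.card_le_of_injective Γ hΓi
    simpa [Fintype.card_fun, Fintype.card_fin] using this
  have c2 : (m+1)^n ≤ (s+1)^n := by
    have h := Fintype.card_le_of_injective Γ' hΓ'i
    have h2 : (m+1)^n ≤ (t+1)^n := by
      simpa [Fintype.card_fun, Fintype.card_fin] using h
    rwa [hts] at h2
  have hpow : (s+1)^n = (m+1)^n := le_antisymm c1 c2
  have h3 : s + 1 = m + 1 := Nat.pow_left_injective (by omega) hpow
  have h4 : s = m := by omega
  rwa [h4]

end Stmt7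
end Stmt7Aux

/-- For `n ≥ 1` and distinct `S, S' ⊆ ℕ = {1,2,3,…}` there is no
bijection between `Y_S` and `Y_{S'}` that is uniformly continuous in both directions. -/
theorem stmt_7 (n : ℕ) (hn : 1 ≤ n) (S S' : Set ℕ) (hS : 0 ∉ S) (hS' : 0 ∉ S')
    (hne : S ≠ S') :
    ¬ ∃ f : ↥(YSet n S) ≃ ↥(YSet n S'),
        UniformContinuous ⇑f ∧ UniformContinuous ⇑f.symm := by
  rintro ⟨f, hf, hf'⟩
  have hn0 : 0 < n := hn
  have h1 := Stmt7.subset_of_equiv hn0 hS hS' f hf hf'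
  have h2 := Stmt7.subset_of_equiv hn0 hS' hS f.symm hf' (by simpa using hf)
  exact hne (Set.Subset.antisymm h1 h2)
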